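/- arXiv:1408.2290 — 2 statements merged into one kernel-verified Lean document; each statement's English description precedes it below -/
import Mathlib

section
/- Let n be a positive integer, let X and Y be real symmetric n×n matrices with Y positive definite, and let K = Y^{-1/2} [−(X+iY), Iₙ] be the n×2n complex matrix formed by horizontally concatenating −Y^{-1/2}(X+iY) and Y^{-1/2}, where Y^{-1/2} is the inverse of the positive-definite square root of Y. Then the imaginary part of the 2n×2n matrix K†K (entrywise imaginary part, where K† is the conjugate transpose) equals the symplectic matrix Σ = [[0, Iₙ],[−Iₙ, 0]]; consequently the drift matrix A = Σ·Im(K†K) equals −I_{2n}, which is Hurwitz. -/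
/-!
STATEMENT 0: For real symmetric n×n matrices X, Y with Y positive definite and
K = Y^{-1/2}·[−(X+iY), Iₙ], the entrywise imaginary part of K†K equals the
symplectic matrix Σ = [[0, Iₙ],[−Iₙ, 0]]; consequently A = Σ·Im(K†K) = −I_{2n},
which is Hurwitz.
-/

open Matrix

noncomputable section

/-- The 2n×2n symplectic form Σ = [[0, Iₙ],[−Iₙ, 0]], with the two halves of the
index set given by the two summands of `Fin n ⊕ Fin n`. -/
def sympJ (n : ℕ) : Matrix (Fin n ⊕ Fin n) (Fin n ⊕ Fin n) ℝ :=
  Matrix.fromBlocks 0 1 (-1) 0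

/-- A real square matrix is Hurwitz if every eigenvalue (i.e. every complex root of its
characteristic polynomial) has negative real part. -/
def IsHurwitz {m : Type*} [Fintype m] [DecidableEq m] (A : Matrix m m ℝ) : Prop :=
  ∀ z : ℂ, (A.map Complex.ofReal).charpoly.IsRoot z → z.re < 0

/-- The positive semidefinite square root of a positive semidefinite matrix (the definition
`Matrix.PosSemidef.sqrt` of the older Mathlib, which has since been removed). -/
def Matrix.PosSemidef.sqrt {n : Type*} [Fintype n] [DecidableEq n] {𝕜 : Type*} [RCLike 𝕜]
    [PartialOrder 𝕜] [StarOrderedRing 𝕜] {A : Matrix n n 𝕜} (hA : A.PosSemidef) : Matrix n n 𝕜 :=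
  (hA.1.eigenvectorUnitary : Matrix n n 𝕜) * diagonal ((↑) ∘ (√·) ∘ hA.1.eigenvalues) *
    (star (hA.1.eigenvectorUnitary : Matrix n n 𝕜))

/-- The coupling matrix K = Y^{-1/2}·[−(X+iY), Iₙ], an n×2n complex matrix, where
Y^{-1/2} is the inverse of the positive-definite square root of Y. -/
def couplingK {n : ℕ} (X Y : Matrix (Fin n) (Fin n) ℝ) (hY : Y.PosDef) :
    Matrix (Fin n) (Fin n ⊕ Fin n) ℂ :=
  (hY.posSemidef.sqrt⁻¹).map Complex.ofReal *
    Matrix.fromCols (-(X.map Complex.ofReal + Complex.I • Y.map Complex.ofReal)) 1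

lemma psd_sqrt_isHermitian' {n : Type*} [Fintype n] [DecidableEq n] {A : Matrix n n ℝ}
    (hA : A.PosSemidef) : hA.sqrt.IsHermitian := by
  unfold Matrix.PosSemidef.sqrt
  have := isHermitian_mul_mul_conjTranspose (hA.1.eigenvectorUnitary : Matrix n n ℝ)
    (isHermitian_diagonal ((↑) ∘ (√·) ∘ hA.1.eigenvalues : n → ℝ))
  exact this

lemma psd_sqrt_mul_self' {n : Type*} [Fintype n] [DecidableEq n] {A : Matrix n n ℝ}
    (hA : A.PosSemidef) : hA.sqrt * hA.sqrt = A := by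
  have hU : star (hA.1.eigenvectorUnitary : Matrix n n ℝ) * hA.1.eigenvectorUnitary = 1 :=
    Unitary.coe_star_mul_self _
  have hd : diagonal ((↑) ∘ (√·) ∘ hA.1.eigenvalues : n → ℝ) *
      diagonal ((↑) ∘ (√·) ∘ hA.1.eigenvalues : n → ℝ)
      = diagonal (RCLike.ofReal ∘ hA.1.eigenvalues) := by
    rw [diagonal_mul_diagonal]; congr 1; funext i
    simp [Real.mul_self_sqrt (hA.eigenvalues_nonneg i)]
  conv_rhs => rw [hA.1.spectral_theorem, Unitary.conjStarAlgAut_apply]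
  simp only [Matrix.PosSemidef.sqrt]
  rw [← hd]
  simp only [Matrix.mul_assoc]
  rw [← Matrix.mul_assoc (star _) _ (diagonal _ * _), hU, Matrix.one_mul]
  rfl

/-! ### Auxiliary lemmas -/

abbrev rmap' {n m : Type*} (A : Matrix n m ℝ) : Matrix n m ℂ := A.map Complex.ofReal

lemma rmap_mul' {k n m : Type*} [Fintype n] (A : Matrix k n ℝ) (B : Matrix n m ℝ) :
    rmap' (A * B) = rmap' A * rmap' B :=
  Matrix.map_mul (f := Complex.ofRealHom)

lemma im_of_parts' {n m : Type*} (A B : Matrix n m ℝ) :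
    (rmap' A + Complex.I • rmap' B).map Complex.im = B := by
  ext i j; simp [Matrix.map_apply]

lemma im_rmap' {n m : Type*} (A : Matrix n m ℝ) :
    (rmap' A).map Complex.im = 0 := by
  ext i j; simp [Matrix.map_apply]

lemma key' {n : Type*} [Fintype n] (P Q M R S : Matrix n n ℝ) :
    (rmap' P + Complex.I • rmap' Q) * rmap' M * (rmap' R + Complex.I • rmap' S) =
      rmap' (P*M*R - Q*M*S) + Complex.I • rmap' (P*M*S + Q*M*R) := by
  have h : ∀ (A B : Matrix n n ℝ), rmap' (A - B) = rmap' A - rmap' B := by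
    intro A B; ext i j; simp [Matrix.map_apply]
  have h2 : ∀ (A B : Matrix n n ℝ), rmap' (A + B) = rmap' A + rmap' B := by
    intro A B; ext i j; simp [Matrix.map_apply]
  simp only [add_mul, mul_add, Matrix.smul_mul, Matrix.mul_smul, smul_smul,
    Complex.I_mul_I, rmap_mul', h, h2, neg_smul, one_smul]
  module

lemma key2' {n : Type*} [Fintype n] (P Q M : Matrix n n ℝ) :
    (rmap' P + Complex.I • rmap' Q) * rmap' M = rmap' (P*M) + Complex.I • rmap' (Q*M) := by
  simp only [add_mul, Matrix.smul_mul, rmap_mul']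

lemma key3' {n : Type*} [Fintype n] (M R S : Matrix n n ℝ) :
    rmap' M * (rmap' R + Complex.I • rmap' S) = rmap' (M*R) + Complex.I • rmap' (M*S) := by
  simp only [mul_add, Matrix.mul_smul, rmap_mul']

lemma main_im' {n : ℕ} (X Y : Matrix (Fin n) (Fin n) ℝ)
    (hX : X.IsSymm) (hYs : Y.IsSymm) (hY : Y.PosDef) :
    ((couplingK X Y hY)ᴴ * couplingK X Y hY).map Complex.im = sympJ n := by
  set Sq := hY.posSemidef.sqrt with hSq
  have hdet : IsUnit Y.det := isUnit_iff_ne_zero.mpr hY.det_pos.ne'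
  have hMY : Y⁻¹ * Y = 1 := Matrix.nonsing_inv_mul Y hdet
  have hYM : Y * Y⁻¹ = 1 := Matrix.mul_nonsing_inv Y hdet
  have hSt : Sqᵀ = Sq := by
    have := psd_sqrt_isHermitian' hY.posSemidef
    simpa [Matrix.IsHermitian] using this
  have hSS : Sq⁻¹ * Sq⁻¹ = Y⁻¹ := by
    rw [← Matrix.mul_inv_rev, psd_sqrt_mul_self' hY.posSemidef]
  have hStinv : (Sq⁻¹)ᵀ = Sq⁻¹ := by
    rw [Matrix.transpose_nonsing_inv, hSt]
  have hA : -(X.map Complex.ofReal + Complex.I • Y.map Complex.ofReal)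
      = rmap' (-X) + Complex.I • rmap' (-Y) := by
    ext i j; simp [Matrix.map_apply]; ring
  have hAH : (rmap' (-X) + Complex.I • rmap' (-Y))ᴴ
      = rmap' (-X) + Complex.I • rmap' Y := by
    ext i j
    simp [Matrix.conjTranspose_apply, Matrix.map_apply, Complex.ext_iff]
    constructor
    · exact congrFun (congrFun hX i) j
    · exact (congrFun (congrFun hYs j) i).symm
  have hK : couplingK X Y hY
      = rmap' (Sq⁻¹) * Matrix.fromCols (rmap' (-X) + Complex.I • rmap' (-Y)) 1 := by
    rw [couplingK, hA]
  have hKH : (couplingK X Y hY)ᴴ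
      = Matrix.fromRows (rmap' (-X) + Complex.I • rmap' Y) 1 * rmap' (Sq⁻¹) := by
    rw [hK, Matrix.conjTranspose_mul, Matrix.conjTranspose_fromCols_eq_fromRows_conjTranspose,
      hAH, Matrix.conjTranspose_one]
    congr 1
    ext i j; simp [Matrix.conjTranspose_apply, Matrix.map_apply,
      ← congrFun (congrFun hStinv j) i, Matrix.transpose_apply]
  have hprod : (couplingK X Y hY)ᴴ * couplingK X Y hY
      = Matrix.fromRows (rmap' (-X) + Complex.I • rmap' Y) 1 * rmap' Y⁻¹ *
        Matrix.fromCols (rmap' (-X) + Complex.I • rmap' (-Y)) 1 := by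
    have aux : ∀ (P : Matrix (Fin n ⊕ Fin n) (Fin n) ℂ) (S C : Matrix (Fin n) (Fin n) ℂ)
        (Q : Matrix (Fin n) (Fin n ⊕ Fin n) ℂ), S * S = C → P * S * (S * Q) = P * C * Q := by
      intro P S C Q h
      rw [Matrix.mul_assoc, ← Matrix.mul_assoc S S Q, h, ← Matrix.mul_assoc]
    rw [hKH, hK]
    exact aux _ _ _ _ (by rw [← rmap_mul', hSS])
  rw [hprod, Matrix.fromRows_mul, Matrix.fromRows_mul_fromCols]
  rw [key', one_mul, mul_one, key2', key3']
  rw [Matrix.fromBlocks_map]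
  rw [mul_one, im_of_parts', im_of_parts', im_of_parts', im_rmap']
  have e11 : -X * Y⁻¹ * -Y + Y * Y⁻¹ * -X = 0 := by
    rw [Matrix.neg_mul, Matrix.neg_mul, Matrix.mul_neg, neg_neg, Matrix.mul_neg,
      mul_assoc, hMY, mul_one, hYM, one_mul, add_neg_cancel]
  have e12 : Y * Y⁻¹ = 1 := hYM
  have e21 : Y⁻¹ * -Y = -1 := by rw [Matrix.mul_neg, hMY]
  rw [e11, e12, e21, sympJ]

lemma sympJ_mul_sympJ (n : ℕ) : sympJ n * sympJ n = -1 := by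
  rw [sympJ, Matrix.fromBlocks_multiply]
  ext (i | i) (j | j) <;>
    simp [Matrix.fromBlocks, Matrix.one_apply, Matrix.neg_apply]

lemma neg_one_hurwitz {m : Type*} [Fintype m] [DecidableEq m] (hm : 0 < Fintype.card m) :
    IsHurwitz (-1 : Matrix m m ℝ) := by
  intro z hz
  have hmap : ((-1 : Matrix m m ℝ)).map Complex.ofReal = -1 := by
    ext i j
    simp [Matrix.map_apply, Matrix.neg_apply, Matrix.one_apply, apply_ite]
  have hchar : ((-1 : Matrix m m ℂ)).charpoly = (Polynomial.X + 1) ^ (Fintype.card m) := by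
    have h1 : Matrix.charmatrix (-1 : Matrix m m ℂ)
        = Matrix.diagonal (fun _ => (Polynomial.X + 1 : Polynomial ℂ)) := by
      ext i j
      by_cases h : i = j
      · subst h; simp [Matrix.charmatrix_apply_eq]
      · simp [Matrix.charmatrix_apply_ne _ _ _ h, Matrix.diagonal_apply_ne _ h, Matrix.one_apply_ne h]
    rw [Matrix.charpoly, h1, Matrix.det_diagonal, Finset.prod_const, Finset.card_univ]
  rw [hmap, hchar] at hz
  have : (z + 1) ^ (Fintype.card m) = 0 := by
    simpa [Polynomial.IsRoot] using hz
  have hz1 : z = -1 := by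
    have := pow_eq_zero_iff hm.ne' |>.mp this
    linear_combination this
  rw [hz1]
  norm_num

theorem im_KdagK_eq_symplectic_and_drift_hurwitz
    (n : ℕ) (hn : 0 < n) (X Y : Matrix (Fin n) (Fin n) ℝ)
    (hX : X.IsSymm) (hYs : Y.IsSymm) (hY : Y.PosDef) :
    ((couplingK X Y hY)ᴴ * couplingK X Y hY).map Complex.im = sympJ n ∧
    sympJ n * ((couplingK X Y hY)ᴴ * couplingK X Y hY).map Complex.im = -1 ∧
    IsHurwitz (sympJ n * ((couplingK X Y hY)ᴴ * couplingK X Y hY).map Complex.im) := by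
  have h1 := main_im' X Y hX hYs hY
  refine ⟨h1, ?_, ?_⟩
  · rw [h1, sympJ_mul_sympJ]
  · rw [h1, sympJ_mul_sympJ]
    exact neg_one_hurwitz (by simp [Fintype.card_sum]; omega)
end
end

section
/- Let n be a positive integer and let X and Y be real symmetric n×n matrices with Y positive definite. Then (2·V_p·Σ)² = −I_{2n}, where V_p = (1/2)[[Y⁻¹, Y⁻¹X],[XY⁻¹, XY⁻¹X + Y]] and Σ = [[0, Iₙ],[−Iₙ, 0]]. -/
/-!
STATEMENT 7: For real symmetric n×n matrices X, Y with Y positive definite,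
(2·V_p·Σ)² = −I_{2n}, where V_p = (1/2)·[[Y⁻¹, Y⁻¹X],[XY⁻¹, XY⁻¹X + Y]] and
Σ = [[0, Iₙ],[−Iₙ, 0]].
-/

open Matrix

noncomputable section

/-- The covariance matrix V_p = (1/2)·[[Y⁻¹, Y⁻¹X],[XY⁻¹, XY⁻¹X + Y]] of the n-mode
pure Gaussian state parametrized by {X, Y}. -/
def pureCov {n : ℕ} (X Y : Matrix (Fin n) (Fin n) ℝ) :
    Matrix (Fin n ⊕ Fin n) (Fin n ⊕ Fin n) ℝ :=
  (1/2 : ℝ) • Matrix.fromBlocks Y⁻¹ (Y⁻¹ * X) (X * Y⁻¹) (X * Y⁻¹ * X + Y)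

theorem pureCov_purity_condition
    (n : ℕ) (hn : 0 < n) (X Y : Matrix (Fin n) (Fin n) ℝ)
    (hX : X.IsSymm) (hYs : Y.IsSymm) (hY : Y.PosDef) :
    ((2 : ℝ) • (pureCov X Y * sympJ n)) ^ 2 = -1 := by
  have hinv : Invertible Y := hY.isUnit.invertible
  have h1 : Y⁻¹ * Y = 1 := inv_mul_of_invertible Y
  have h2 : Y * Y⁻¹ = 1 := mul_inv_of_invertible Y
  have key : (2 : ℝ) • (pureCov X Y * sympJ n)
      = Matrix.fromBlocks (-(Y⁻¹ * X)) Y⁻¹ (-(X * Y⁻¹ * X + Y)) (X * Y⁻¹) := by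
    rw [pureCov, sympJ, smul_mul_assoc, smul_smul]
    norm_num
    rw [Matrix.fromBlocks_multiply]
    simp [Matrix.mul_neg]
  rw [key, pow_two, Matrix.fromBlocks_multiply]
  have tl : -(Y⁻¹ * X) * -(Y⁻¹ * X) + Y⁻¹ * -(X * Y⁻¹ * X + Y) = -1 := by
    simp only [neg_mul, mul_neg, neg_neg, mul_add, add_mul, Matrix.mul_assoc, h1, h2,
      Matrix.mul_one, Matrix.one_mul, mul_one, one_mul, Matrix.mul_inv_cancel_left_of_invertible, Matrix.inv_mul_cancel_left_of_invertible]
    abel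
  have tr : -(Y⁻¹ * X) * Y⁻¹ + Y⁻¹ * (X * Y⁻¹) = 0 := by
    simp only [neg_mul, Matrix.mul_assoc]
    abel
  have bl : -(X * Y⁻¹ * X + Y) * -(Y⁻¹ * X) + X * Y⁻¹ * -(X * Y⁻¹ * X + Y) = 0 := by
    simp only [neg_mul, mul_neg, neg_neg, mul_add, add_mul, Matrix.mul_assoc, h1, h2,
      Matrix.mul_one, Matrix.one_mul, mul_one, one_mul, Matrix.mul_inv_cancel_left_of_invertible, Matrix.inv_mul_cancel_left_of_invertible]
    abel
  have br : -(X * Y⁻¹ * X + Y) * Y⁻¹ + X * Y⁻¹ * (X * Y⁻¹) = -1 := by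
    simp only [neg_mul, mul_neg, neg_neg, mul_add, add_mul, Matrix.mul_assoc, h1, h2,
      Matrix.mul_one, Matrix.one_mul, mul_one, one_mul, Matrix.mul_inv_cancel_left_of_invertible, Matrix.inv_mul_cancel_left_of_invertible]
    abel
  rw [tl, tr, bl, br]
  ext (i|i) (j|j) <;> simp [Matrix.fromBlocks, Matrix.one_apply]
end
end
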